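/- In the ternary-relation semantics for knowing value, the binary diamond is definable from the unary one: M,s ⊨ ◇^c(φ,ψ) iff M,s satisfies the disjunction of (◇^c φ ∧ ◇ψ), (◇^c ψ ∧ ◇φ), and (◇φ ∧ ◇ψ ∧ ¬◇^c φ ∧ ¬◇^c ψ ∧ ◇^c(φ∨ψ)), where ◇^c χ abbreviates ◇^c(χ,χ), provided the ternary relation R^c satisfies symmetry, inclusion in the binary relation, and the anti-Euclidean property. -/
import Mathlib


/-- Unary diamond: some →-successor satisfies φ. -/
def dia {S : Type*} (r : S → S → Prop) (φ : S → Prop) (s : S) : Prop :=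
  ∃ t, r s t ∧ φ t

/-- Binary value-diamond: there are u,v with R^c s u v, u ⊨ φ, v ⊨ ψ. -/
def diaC {S : Type*} (Rc : S → S → S → Prop) (φ ψ : S → Prop) (s : S) : Prop :=
  ∃ u v, Rc s u v ∧ φ u ∧ ψ v

/-- The binary diamond is definable from the unary one (◇^c χ := ◇^c(χ,χ)),
given symmetry, inclusion, and the anti-Euclidean property of R^c. -/
theorem binary_diamond_definable {S : Type*} (r : S → S → Prop)
    (Rc : S → S → S → Prop)
    (hsym : ∀ s u v, Rc s u v ↔ Rc s v u)
    (hincl : ∀ s u v, Rc s u v → r s u ∧ r s v)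
    (hae : ∀ s t1 t2 u, Rc s t1 t2 → r s u → Rc s u t1 ∨ Rc s u t2)
    (φ ψ : S → Prop) (s : S) :
    diaC Rc φ ψ s ↔
      ((diaC Rc φ φ s ∧ dia r ψ s) ∨
       (diaC Rc ψ ψ s ∧ dia r φ s) ∨
       (dia r φ s ∧ dia r ψ s ∧ ¬ diaC Rc φ φ s ∧ ¬ diaC Rc ψ ψ s ∧
         diaC Rc (fun t => φ t ∨ ψ t) (fun t => φ t ∨ ψ t) s)) := by
  constructor
  · rintro ⟨u, v, huv, hu, hv⟩
    by_cases h1 : diaC Rc φ φ s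
    · exact Or.inl ⟨h1, v, (hincl s u v huv).2, hv⟩
    by_cases h2 : diaC Rc ψ ψ s
    · exact Or.inr (Or.inl ⟨h2, u, (hincl s u v huv).1, hu⟩)
    · exact Or.inr (Or.inr ⟨⟨u, (hincl s u v huv).1, hu⟩, ⟨v, (hincl s u v huv).2, hv⟩,
        h1, h2, u, v, huv, Or.inl hu, Or.inr hv⟩)
  · rintro (⟨⟨u, u', huu, hu, hu'⟩, ⟨t, hrt, hψt⟩⟩ | ⟨⟨v, v', hvv, hv, hv'⟩, ⟨t, hrt, hφt⟩⟩ |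
      ⟨_, _, h1, h2, ⟨u, v, huv, hu, hv⟩⟩)
    · rcases hae s u u' t huu hrt with h | h
      · exact ⟨u, t, (hsym s t u).mp h, hu, hψt⟩
      · exact ⟨u', t, (hsym s t u').mp h, hu', hψt⟩
    · rcases hae s v v' t hvv hrt with h | h
      · exact ⟨t, v, h, hφt, hv⟩
      · exact ⟨t, v', h, hφt, hv'⟩
    · rcases hu with hu | hu <;> rcases hv with hv | hv
      · exact absurd ⟨u, v, huv, hu, hv⟩ h1
      · exact ⟨u, v, huv, hu, hv⟩
      · exact ⟨v, u, (hsym s u v).mp huv, hv, hu⟩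
      · exact absurd ⟨u, v, huv, hu, hv⟩ h2
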